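/- For all integers m ≥ 0 and 0 ≤ j ≤ m: the absolute value of the determinant of G(m, j) equals ∏_{i=0}^{j} 2^{(j−i)·C(m,i)} (this is the volume of the lattice Λ(m, j)), and for every coordinate index i the vector 2ʲ·eᵢ belongs to Λ(m, j); hence Λ(m, j) can be reduced to a code of length 2ᵐ over ℤ_{2ʲ}. -/

import Mathlib

/-- `Hmat m` : the `2^m × 2^m` matrix defined by `H₀ = [1]` and
`H_{m+1} = [[Hₘ, Hₘ], [0, Hₘ]]` in block form. -/
def Hmat : (m : ℕ) → Matrix (Fin (2 ^ m)) (Fin (2 ^ m)) ℤ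
  | 0 => Matrix.of fun _ _ => 1
  | m + 1 =>
      Matrix.reindex
        (finSumFinEquiv.trans (finCongr (by rw [pow_succ, mul_two] :
          2 ^ m + 2 ^ m = 2 ^ (m + 1))))
        (finSumFinEquiv.trans (finCongr (by rw [pow_succ, mul_two] :
          2 ^ m + 2 ^ m = 2 ^ (m + 1))))
        (Matrix.fromBlocks (Hmat m) (Hmat m) 0 (Hmat m))

/-- `Smat m` : the `2^m × 2^m` Sylvester Hadamard matrix, `𝓗₀ = [1]`,
`𝓗_{m+1} = [[𝓗ₘ, 𝓗ₘ], [𝓗ₘ, −𝓗ₘ]]`. -/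
def Smat : (m : ℕ) → Matrix (Fin (2 ^ m)) (Fin (2 ^ m)) ℤ
  | 0 => Matrix.of fun _ _ => 1
  | m + 1 =>
      Matrix.reindex
        (finSumFinEquiv.trans (finCongr (by rw [pow_succ, mul_two] :
          2 ^ m + 2 ^ m = 2 ^ (m + 1))))
        (finSumFinEquiv.trans (finCongr (by rw [pow_succ, mul_two] :
          2 ^ m + 2 ^ m = 2 ^ (m + 1))))
        (Matrix.fromBlocks (Smat m) (Smat m) (Smat m) (-(Smat m)))

/-- Hamming weight of the `s`-th row of `Hmat m`. -/
def rowWeight (m : ℕ) (s : Fin (2 ^ m)) : ℕ :=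
  (Finset.univ.filter (fun t => Hmat m s t ≠ 0)).card

/-- `Gmat m j` : the matrix whose `s`-th row is the `s`-th row of `Hmat m`
multiplied by `2^(j − ℓ)` (truncated subtraction) where `2^ℓ` is the Hamming
weight of that row. -/
def Gmat (m j : ℕ) : Matrix (Fin (2 ^ m)) (Fin (2 ^ m)) ℤ :=
  Matrix.of fun s t => (2 : ℤ) ^ (j - Nat.log 2 (rowWeight m s)) * Hmat m s t

/-- The lattice generated by the rows of `G`. -/
def latticeOf {n : ℕ} (G : Matrix (Fin n) (Fin n) ℤ) : Set (Fin n → ℤ) :=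
  { x | ∃ u : Fin n → ℤ, x = Matrix.vecMul u G }

def eqv (m : ℕ) : Fin (2 ^ m) ⊕ Fin (2 ^ m) ≃ Fin (2 ^ (m + 1)) :=
  finSumFinEquiv.trans (finCongr (by rw [pow_succ, mul_two]))

lemma Hmat_succ (m : ℕ) :
    Hmat (m + 1) = Matrix.reindex (eqv m) (eqv m)
      (Matrix.fromBlocks (Hmat m) (Hmat m) 0 (Hmat m)) := rfl

lemma Hmat_succ_apply (m : ℕ) (p q : Fin (2 ^ m) ⊕ Fin (2 ^ m)) :
    Hmat (m + 1) (eqv m p) (eqv m q) =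
      Matrix.fromBlocks (Hmat m) (Hmat m) 0 (Hmat m) p q := by
  rw [Hmat_succ]; simp

lemma rowWeight_eq_sum (m : ℕ) (s : Fin (2 ^ m)) :
    rowWeight m s = ∑ t : Fin (2 ^ m), if Hmat m s t ≠ 0 then 1 else 0 := by
  rw [rowWeight, Finset.card_filter]

lemma rowWeight_succ (m : ℕ) (p : Fin (2 ^ m) ⊕ Fin (2 ^ m)) :
    rowWeight (m + 1) (eqv m p) =
      Sum.elim (fun s => 2 * rowWeight m s) (fun s => rowWeight m s) p := by
  rw [rowWeight_eq_sum]
  rw [← Fintype.sum_equiv (eqv m) (fun q => if Hmat (m+1) (eqv m p) (eqv m q) ≠ 0 then (1:ℕ) else 0)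
    _ (fun q => rfl)]
  simp only [Hmat_succ_apply]
  cases p with
  | inl s =>
    simp [Fintype.sum_sum_type, rowWeight_eq_sum, two_mul]
    congr
  | inr s =>
    simp [Fintype.sum_sum_type, rowWeight_eq_sum]
    congr

lemma rowWeight_zero (s : Fin (2 ^ 0)) : rowWeight 0 s = 1 := by
  rw [rowWeight_eq_sum]
  simp [Hmat]

lemma rowWeight_pos (m : ℕ) (s : Fin (2 ^ m)) : 0 < rowWeight m s := by
  induction m with
  | zero => rw [rowWeight_zero]; norm_num
  | succ m ih =>
    obtain ⟨p, rfl⟩ := (eqv m).surjective s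
    rw [rowWeight_succ]
    cases p with
    | inl s => simpa using Nat.lt_of_lt_of_le (ih s) (by omega)
    | inr s => simpa using ih s

lemma det_Hmat (m : ℕ) : (Hmat m).det = 1 := by
  induction m with
  | zero =>
    have : (Hmat 0) = 1 := by
      ext i j
      fin_cases i; fin_cases j; simp [Hmat]
    rw [this, Matrix.det_one]
  | succ m ih =>
    rw [Hmat_succ, Matrix.det_reindex_self, Matrix.det_fromBlocks_zero₂₁, ih, mul_one]

lemma sum_sub_log (m : ℕ) : ∀ j : ℕ,
    ∑ s : Fin (2 ^ m), (j - Nat.log 2 (rowWeight m s)) =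
      ∑ i ∈ Finset.range (j + 1), (j - i) * m.choose i := by
  induction m with
  | zero =>
    intro j
    have h2 : ∑ i ∈ Finset.range (j + 1), (j - i) * Nat.choose 0 i = j := by
      rw [Finset.sum_eq_single 0]
      · simp
      · intro b _ hb
        simp [Nat.choose_eq_zero_of_lt (Nat.pos_of_ne_zero hb)]
      · simp
    rw [h2]
    simp [rowWeight_zero]
  | succ m ih =>
    intro j
    have key : ∑ s : Fin (2 ^ (m+1)), (j - Nat.log 2 (rowWeight (m+1) s)) =
        (∑ s : Fin (2 ^ m), ((j - 1) - Nat.log 2 (rowWeight m s))) +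
        (∑ s : Fin (2 ^ m), (j - Nat.log 2 (rowWeight m s))) := by
      rw [← Fintype.sum_equiv (eqv m)
        (fun p => j - Nat.log 2 (rowWeight (m+1) (eqv m p))) _ (fun p => rfl)]
      rw [Fintype.sum_sum_type]
      congr 1
      · apply Finset.sum_congr rfl
        intro s _
        rw [rowWeight_succ]
        simp only [Sum.elim_inl]
        rw [mul_comm, Nat.log_mul_base (by norm_num) (rowWeight_pos m s).ne']
        omega
      · apply Finset.sum_congr rfl
        intro s _
        rw [rowWeight_succ, Sum.elim_inr]
    rw [key, ih, ih]
    -- now a pure binomial identity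
    cases j with
    | zero => simp
    | succ k =>
      have hps : ∀ i : ℕ, (m+1).choose (i+1) = m.choose i + m.choose (i+1) :=
        fun i => Nat.choose_succ_succ m i
      simp only [Nat.add_sub_cancel]
      rw [Finset.sum_range_succ' (fun i => (k + 1 - i) * (m+1).choose i) (k+1)]
      rw [Finset.sum_range_succ' (fun i => (k + 1 - i) * m.choose i) (k+1)]
      simp only [hps, Nat.succ_sub_succ, Nat.sub_zero, Nat.choose_zero_right, mul_one,
        Nat.add_sub_cancel, Nat.mul_add]
      rw [Finset.sum_add_distrib]
      omega

lemma Gmat_eq (m j : ℕ) :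
    Gmat m j = Matrix.diagonal (fun s => (2:ℤ) ^ (j - Nat.log 2 (rowWeight m s))) * Hmat m := by
  ext s t
  simp [Gmat, Matrix.diagonal_mul]


/-- The volume of `Λ(m, j)` (the absolute value of `det G(m, j)`) equals
`∏_{i=0}^{j} 2^{(j−i)·C(m,i)}`, and `2^j • eᵢ ∈ Λ(m, j)` for every coordinate
`i`; hence `Λ(m, j)` reduces to a code of length `2^m` over `ℤ_{2^j}`. -/
theorem det_Gmj_and_two_pow_single_mem (m j : ℕ) (hj : j ≤ m) :
    (Gmat m j).det.natAbs = ∏ i ∈ Finset.range (j + 1), 2 ^ ((j - i) * m.choose i) ∧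
    ∀ i : Fin (2 ^ m), (Pi.single i ((2 : ℤ) ^ j) : Fin (2 ^ m) → ℤ) ∈ latticeOf (Gmat m j) := by
  constructor
  · rw [Gmat_eq, Matrix.det_mul, Matrix.det_diagonal, det_Hmat, mul_one]
    rw [Finset.prod_pow_eq_pow_sum, sum_sub_log]
    rw [Finset.prod_pow_eq_pow_sum]
    rw [show ((2:ℤ) ^ (∑ i ∈ Finset.range (j+1), (j - i) * m.choose i)) =
      ((2 ^ (∑ i ∈ Finset.range (j+1), (j - i) * m.choose i) : ℕ) : ℤ) by push_cast; ring]
    exact Int.natAbs_natCast _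
  · intro i
    refine ⟨fun t => (Hmat m).adjugate i t *
      (2:ℤ) ^ (j - (j - Nat.log 2 (rowWeight m t))), ?_⟩
    funext i'
    have hadj : (Hmat m).adjugate * Hmat m = 1 := by
      rw [Matrix.adjugate_mul, det_Hmat, one_smul]
    have hsum : ∀ t : Fin (2 ^ m),
        ((Hmat m).adjugate i t * (2:ℤ) ^ (j - (j - Nat.log 2 (rowWeight m t)))) *
          Gmat m j t i' = (2:ℤ) ^ j * ((Hmat m).adjugate i t * Hmat m t i') := by
      intro t
      have : (2:ℤ) ^ (j - (j - Nat.log 2 (rowWeight m t))) *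
          (2:ℤ) ^ (j - Nat.log 2 (rowWeight m t)) = 2 ^ j := by
        rw [← pow_add, Nat.sub_add_cancel (Nat.sub_le _ _)]
      simp only [Gmat, Matrix.of_apply]
      calc ((Hmat m).adjugate i t * (2:ℤ) ^ (j - (j - Nat.log 2 (rowWeight m t)))) *
          ((2:ℤ) ^ (j - Nat.log 2 (rowWeight m t)) * Hmat m t i')
          = ((2:ℤ) ^ (j - (j - Nat.log 2 (rowWeight m t))) *
            (2:ℤ) ^ (j - Nat.log 2 (rowWeight m t))) *
            ((Hmat m).adjugate i t * Hmat m t i') := by ring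
        _ = (2:ℤ) ^ j * ((Hmat m).adjugate i t * Hmat m t i') := by rw [this]
    rw [Pi.single_apply]
    simp only [Matrix.vecMul, dotProduct]
    rw [Finset.sum_congr rfl (fun t _ => hsum t), ← Finset.mul_sum]
    have : ∑ t, (Hmat m).adjugate i t * Hmat m t i' = ((Hmat m).adjugate * Hmat m) i i' := by
      rw [Matrix.mul_apply]
    rw [this, hadj, Matrix.one_apply]
    by_cases h : i' = i
    · simp [h]
    · rw [if_neg h, if_neg (fun hh => h hh.symm), mul_zero]
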